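/- arXiv:1504.02214 — 2 statements merged into one kernel-verified Lean document; each statement's English description precedes it below -/
import Mathlib

section
/- Let x ∈ ℂ^N, N = 2^J, have support {(μ+r) mod N : r = 0,...,m-1} with m < 2^{L+1} and first support index μ = μ^(L+1) + 2^{L+1}ν where μ^(L+1) ∈ {0,...,2^{L+1}-1}. For κ ∈ {0,...,2^{J-L-1}-1}, let z^(κ) = F_{2^{L+1}}^{-1}(x̂_{2^{J-L-1}k+κ})_{k=0}^{2^{L+1}-1}. Then z^(κ)_{(μ^(L+1)+k) mod 2^{L+1}} = x_{(μ+k) mod N} · ω_N^{κ(μ+k)} for all k = 0,...,m-1, where ω_N = e^{-2πi/N}. -/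
/-- Discrete Fourier transform of length `N`, `(dft N x) k = ∑_{j<N} x j ω_N^{jk}`
with `ω_N = e^{-2πi/N}`. -/
noncomputable def dft (N : ℕ) (x : ℕ → ℂ) (k : ℕ) : ℂ :=
  ∑ j ∈ Finset.range N, x j * Complex.exp (-2 * Real.pi * Complex.I * ((j : ℂ) * k) / N)

/-- `2^j`-periodization of a vector of length `2^J`. -/
noncomputable def perio (x : ℕ → ℂ) (J j k : ℕ) : ℂ :=
  ∑ ℓ ∈ Finset.range (2 ^ (J - j)), x (k + 2 ^ j * ℓ)

/-- Inverse DFT of length `2^{L+1}` applied to the `κ`-shifted subsampling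
`(x̂_{2^{J-L-1}k+κ})_{k<2^{L+1}}` of the DFT of `x ∈ ℂ^{2^J}`. -/
noncomputable def zvec (J L : ℕ) (x : ℕ → ℂ) (κ ℓ : ℕ) : ℂ :=
  (2 ^ (L + 1) : ℂ)⁻¹ * ∑ k ∈ Finset.range (2 ^ (L + 1)),
    dft (2 ^ J) x (2 ^ (J - L - 1) * k + κ) *
      Complex.exp (2 * Real.pi * Complex.I * ((k : ℂ) * ℓ) / 2 ^ (L + 1))

lemma orth (M : ℕ) (hM : 0 < M) (a : ℤ) :
    ∑ t ∈ Finset.range M, Complex.exp (2 * Real.pi * Complex.I * (t * a) / M) =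
      if (M : ℤ) ∣ a then (M : ℂ) else 0 := by
  have hM0 : (M : ℂ) ≠ 0 := Nat.cast_ne_zero.mpr hM.ne'
  set ζ : ℂ := Complex.exp (2 * Real.pi * Complex.I * a / M) with hζ
  have hpow : ∀ t : ℕ, Complex.exp (2 * Real.pi * Complex.I * (t * a) / M) = ζ ^ t := by
    intro t
    rw [hζ, ← Complex.exp_nat_mul]
    ring_nf
  simp_rw [hpow]
  by_cases hdvd : (M : ℤ) ∣ a
  · rw [if_pos hdvd]
    obtain ⟨b, hb⟩ := hdvd
    have h1 : ζ = 1 := by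
      rw [hζ, hb]
      rw [show 2 * Real.pi * Complex.I * ((M : ℤ) * b : ℤ) / M = b * (2 * Real.pi * Complex.I) by
        push_cast; field_simp]
      exact Complex.exp_int_mul_two_pi_mul_I b
    simp [h1]
  · have hζ1 : ζ ≠ 1 := by
      intro h
      rw [hζ, Complex.exp_eq_one_iff] at h
      obtain ⟨n, hn⟩ := h
      apply hdvd
      refine ⟨n, ?_⟩
      have hne : (2 * Real.pi * Complex.I : ℂ) ≠ 0 := by
        simp [Real.pi_ne_zero, Complex.I_ne_zero]
      have h3 : (a : ℂ) / M = n :=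
        mul_left_cancel₀ hne (by linear_combination hn)
      have h2 : (a : ℂ) = M * n := by
        field_simp at h3; linear_combination h3
      exact_mod_cast h2
    rw [geom_sum_eq hζ1, if_neg hdvd]
    have hM1 : ζ ^ M = 1 := by
      rw [hζ, ← Complex.exp_nat_mul]
      rw [show (M : ℂ) * (2 * Real.pi * Complex.I * a / M) = a * (2 * Real.pi * Complex.I) by
        field_simp]
      exact Complex.exp_int_mul_two_pi_mul_I a
    simp [hM1]

/-- On the support, `z^{(κ)}_{(μ^{(L+1)}+k) mod 2^{L+1}} = x_{(μ+k) mod N} ω_N^{κ(μ+k)}`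
where `μ = μ^{(L+1)} + 2^{L+1}ν`. -/
theorem zvec_on_support (J L m μL ν κ : ℕ) (hL : L + 1 < J) (hm : m < 2 ^ (L + 1))
    (hμL : μL < 2 ^ (L + 1)) (hν : ν < 2 ^ (J - L - 1)) (hκ : κ < 2 ^ (J - L - 1))
    (x : ℕ → ℂ)
    (hsupp : ∀ k < 2 ^ J,
      (∀ r < m, k ≠ (μL + 2 ^ (L + 1) * ν + r) % 2 ^ J) → x k = 0) :
    ∀ k < m,
      zvec J L x κ ((μL + k) % 2 ^ (L + 1)) =
        x ((μL + 2 ^ (L + 1) * ν + k) % 2 ^ J) *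
          Complex.exp (-2 * Real.pi * Complex.I *
            ((κ : ℂ) * (μL + 2 ^ (L + 1) * ν + k : ℕ)) / 2 ^ J) := by
  intro k hk
  -- notation
  have hMpos : (0:ℕ) < 2 ^ (L + 1) := pow_pos (by norm_num) _
  have hNpos : (0:ℕ) < 2 ^ J := pow_pos (by norm_num) _
  have hTM : 2 ^ (J - L - 1) * 2 ^ (L + 1) = 2 ^ J := by
    rw [← pow_add]; congr 1; omega
  have hMc : ((2 ^ (L + 1) : ℕ) : ℂ) ≠ 0 := Nat.cast_ne_zero.mpr hMpos.ne'
  have hNc : ((2 ^ J : ℕ) : ℂ) ≠ 0 := Nat.cast_ne_zero.mpr hNpos.ne'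
  have hNcTM : ((2 ^ J : ℕ) : ℂ) = ((2 ^ (J - L - 1) : ℕ) : ℂ) * ((2 ^ (L + 1) : ℕ) : ℂ) := by
    exact_mod_cast congrArg (Nat.cast : ℕ → ℂ) hTM.symm
  set ℓ := (μL + k) % 2 ^ (L + 1) with hℓdef
  set j₀ := (μL + 2 ^ (L + 1) * ν + k) % 2 ^ J with hj₀def
  -- Step 1: zvec as a filtered sum
  have key : zvec J L x κ ℓ =
      ∑ j ∈ Finset.range (2 ^ J),
        x j * Complex.exp (-2 * Real.pi * Complex.I * ((j : ℂ) * κ) / (2 ^ J : ℕ)) *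
          (if ((2 ^ (L + 1) : ℕ) : ℤ) ∣ (ℓ : ℤ) - (j : ℤ) then 1 else 0) := by
    unfold zvec dft
    simp_rw [Finset.sum_mul]
    rw [Finset.sum_comm]
    have hterm : ∀ j ∈ Finset.range (2 ^ J), ∀ t ∈ Finset.range (2 ^ (L + 1)),
        x j * Complex.exp (-2 * Real.pi * Complex.I *
            ((j : ℂ) * ((2 ^ (J - L - 1) * t + κ : ℕ) : ℂ)) / ((2 ^ J : ℕ) : ℂ)) *
          Complex.exp (2 * Real.pi * Complex.I * ((t : ℂ) * (ℓ : ℂ)) / (2 : ℂ) ^ (L + 1)) =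
        x j * Complex.exp (-2 * Real.pi * Complex.I * ((j : ℂ) * κ) / ((2 ^ J : ℕ) : ℂ)) *
          Complex.exp (2 * Real.pi * Complex.I *
            ((t : ℂ) * (((ℓ : ℤ) - (j : ℤ) : ℤ) : ℂ)) / ((2 ^ (L + 1) : ℕ) : ℂ)) := by
      intro j _ t _
      conv_lhs => rw [mul_assoc, ← Complex.exp_add]
      conv_rhs => rw [mul_assoc, ← Complex.exp_add]
      congr 2
      rw [hNcTM]
      push_cast
      field_simp
      ring
    rw [Finset.mul_sum]
    refine Finset.sum_congr rfl fun j hj => ?_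
    rw [Finset.sum_congr rfl (hterm j hj), ← Finset.mul_sum,
      orth _ hMpos ((ℓ : ℤ) - (j : ℤ))]
    split_ifs with h
    · field_simp; push_cast; ring
    · simp
  rw [key]
  -- Step 2: only j = j₀ survives
  have hj₀mem : j₀ ∈ Finset.range (2 ^ J) := Finset.mem_range.mpr (Nat.mod_lt _ hNpos)
  have hMdvdN : (2 ^ (L + 1) : ℕ) ∣ 2 ^ J := ⟨2 ^ (J - L - 1), by rw [← hTM]; ring⟩
  have hmodj₀ : j₀ % 2 ^ (L + 1) = ℓ := by
    rw [hj₀def, hℓdef, Nat.mod_mod_of_dvd _ hMdvdN]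
    conv_lhs => rw [show μL + 2 ^ (L + 1) * ν + k = μL + k + 2 ^ (L + 1) * ν by ring]
    rw [Nat.add_mul_mod_self_left]
  rw [Finset.sum_eq_single_of_mem j₀ hj₀mem]
  · -- value at j₀
    have hdvd : ((2 ^ (L + 1) : ℕ) : ℤ) ∣ (ℓ : ℤ) - (j₀ : ℤ) := by
      have : (j₀ : ℤ) ≡ (ℓ : ℤ) [ZMOD ((2 ^ (L + 1) : ℕ) : ℤ)] := by
        unfold Int.ModEq
        rw [← Int.natCast_mod, ← Int.natCast_mod, hmodj₀, Nat.mod_mod_of_dvd _ dvd_rfl]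
      exact this.dvd
    rw [if_pos hdvd, mul_one]
    congr 1
    -- the phase
    have hdm : μL + 2 ^ (L + 1) * ν + k = 2 ^ J * ((μL + 2 ^ (L + 1) * ν + k) / 2 ^ J) + j₀ :=
      (Nat.div_add_mod _ _).symm
    set q := (μL + 2 ^ (L + 1) * ν + k) / 2 ^ J with hq
    have hdmC : ((μL + 2 ^ (L + 1) * ν + k : ℕ) : ℂ) = ((2 ^ J : ℕ) : ℂ) * q + j₀ := by
      exact_mod_cast congrArg (Nat.cast : ℕ → ℂ) hdm
    have harg : -2 * Real.pi * Complex.I * ((j₀ : ℂ) * κ) / ((2 ^ J : ℕ) : ℂ) =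
        -2 * Real.pi * Complex.I * ((κ : ℂ) * ((μL + 2 ^ (L + 1) * ν + k : ℕ) : ℂ)) / (2 : ℂ) ^ J
          + ((κ * q : ℕ) : ℤ) * (2 * Real.pi * Complex.I) := by
      have h2J : ((2 ^ J : ℕ) : ℂ) = (2 : ℂ) ^ J := by push_cast; ring
      rw [hdmC, h2J]
      have h2Jne : ((2:ℂ)) ^ J ≠ 0 := by rw [← h2J]; exact hNc
      push_cast
      field_simp
      ring
    rw [harg, Complex.exp_add, Complex.exp_int_mul_two_pi_mul_I, mul_one]
  · -- other j vanish
    intro j hj hne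
    by_cases hd : ((2 ^ (L + 1) : ℕ) : ℤ) ∣ (ℓ : ℤ) - (j : ℤ)
    · rw [if_pos hd, mul_one]
      have hxj : x j = 0 := by
        apply hsupp j (Finset.mem_range.mp hj)
        intro r hr hjr
        apply hne
        -- from hd : j ≡ ℓ mod M, and j = (μ+r) mod N, derive r = k
        have hjℓ : j % 2 ^ (L + 1) = ℓ % 2 ^ (L + 1) := by
          have : (j : ℤ) ≡ (ℓ : ℤ) [ZMOD ((2 ^ (L + 1) : ℕ) : ℤ)] := Int.modEq_iff_dvd.mpr hd
          unfold Int.ModEq at this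
          rw [← Int.natCast_mod, ← Int.natCast_mod] at this
          exact_mod_cast this
        have hjr' : j % 2 ^ (L + 1) = (μL + r) % 2 ^ (L + 1) := by
          rw [hjr, Nat.mod_mod_of_dvd _ hMdvdN]
          conv_lhs => rw [show μL + 2 ^ (L + 1) * ν + r = μL + r + 2 ^ (L + 1) * ν by ring]
          rw [Nat.add_mul_mod_self_left]
        have hℓk : ℓ % 2 ^ (L + 1) = (μL + k) % 2 ^ (L + 1) := by
          rw [hℓdef, Nat.mod_mod_of_dvd _ dvd_rfl]
        have hrk : (μL + r) % 2 ^ (L + 1) = (μL + k) % 2 ^ (L + 1) := by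
          rw [← hjr', hjℓ, hℓk]
        have hrk' : r = k := by
          have h1 : r ≡ k [MOD 2 ^ (L + 1)] := Nat.ModEq.add_left_cancel' μL hrk
          have := h1.eq_of_lt_of_lt (lt_trans hr hm) (lt_trans hk hm)
          exact this
        rw [hjr, hrk']
      simp [hxj]
    · rw [if_neg hd, mul_zero]
end

section
/- Let x ∈ ℂ^N, N = 2^J, have support {(μ+r) mod N : r = 0,...,m-1} with m < 2^{L+1} ≤ N, μ = μ^(L+1) + 2^{L+1}ν, and let κ₀,...,κ_B ∈ {0,...,2^{J-L-1}-1} be distinct. With z^(κ) as above, the averaging formula x_{(μ+k) mod N} = (1/(B+1)) Σ_{r=0}^{B} z^(κ_r)_{(μ^(L+1)+k) mod 2^{L+1}} ω_N^{-κ_r(μ+k)} holds exactly for all k = 0,...,m-1. -/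

lemma sum_exp_eq (M : ℕ) (hM : 0 < M) (d : ℤ) :
    ∑ k ∈ Finset.range M, Complex.exp (2*Real.pi*Complex.I*((k:ℂ)*(d:ℂ))/M)
      = if (M:ℤ) ∣ d then (M:ℂ) else 0 := by
  have hMC : (M:ℂ) ≠ 0 := Nat.cast_ne_zero.mpr hM.ne'
  have hterm : ∀ k : ℕ, Complex.exp (2*Real.pi*Complex.I*((k:ℂ)*(d:ℂ))/M)
      = (Complex.exp (2*Real.pi*Complex.I*(d:ℂ)/M))^k := by
    intro k
    rw [← Complex.exp_nat_mul]
    ring_nf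
  simp only [hterm]
  by_cases h : (M:ℤ) ∣ d
  · obtain ⟨c, hc⟩ := h
    have h1 : Complex.exp (2*Real.pi*Complex.I*(d:ℂ)/M) = 1 := by
      rw [Complex.exp_eq_one_iff]
      refine ⟨c, ?_⟩
      have : (d:ℂ) = M * c := by exact_mod_cast congrArg (Int.cast : ℤ → ℂ) hc
      rw [this]; field_simp
    rw [if_pos ⟨c, hc⟩]
    simp [h1]
  · rw [if_neg h]
    have hπ : (2*(Real.pi:ℂ)*Complex.I : ℂ) ≠ 0 := by
      simp [Real.pi_ne_zero, Complex.I_ne_zero]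
    have hζ : Complex.exp (2*Real.pi*Complex.I*(d:ℂ)/M) ≠ 1 := by
      rw [Ne, Complex.exp_eq_one_iff]
      rintro ⟨n, hn⟩
      apply h
      have hn' : (2*(Real.pi:ℂ)*Complex.I) * ((d:ℂ)/M) = (2*(Real.pi:ℂ)*Complex.I) * n := by
        rw [mul_comm ((n:ℂ)) _] at hn; rw [← hn]; ring
      have hd : (d:ℂ)/M = n := mul_left_cancel₀ hπ hn'
      have hd2 : (d:ℂ) = n * M := by
        field_simp at hd; linear_combination hd
      refine ⟨n, ?_⟩; have hd3 : d = n * (M:ℤ) := by exact_mod_cast hd2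
      rw [hd3]; ring
    have hpow : (Complex.exp (2*Real.pi*Complex.I*(d:ℂ)/M))^M = 1 := by
      rw [← Complex.exp_nat_mul, Complex.exp_eq_one_iff]
      exact ⟨d, by field_simp⟩
    rw [geom_sum_eq hζ, hpow]
    simp

lemma zvec_eq (J L : ℕ) (hL : L + 1 ≤ J) (x : ℕ → ℂ) (κ ℓ : ℕ) :
    zvec J L x κ ℓ = ∑ j ∈ Finset.range (2 ^ J),
      if (2^(L+1) : ℤ) ∣ (ℓ : ℤ) - j then
        x j * Complex.exp (-2*Real.pi*Complex.I*((j:ℂ)*κ)/2^J) else 0 := by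
  have hMne : ((2:ℂ) ^ (L+1)) ≠ 0 := pow_ne_zero _ two_ne_zero
  have hNne : ((2:ℂ) ^ J) ≠ 0 := pow_ne_zero _ two_ne_zero
  have hNsplit : ((2:ℂ) ^ J) = 2 ^ (J - L - 1) * 2 ^ (L+1) := by
    rw [← pow_add]; congr 1; omega
  unfold zvec dft
  simp only [Finset.sum_mul]
  rw [Finset.sum_comm, Finset.mul_sum]
  refine Finset.sum_congr rfl fun j hj => ?_
  have hterm : ∀ k ∈ Finset.range (2^(L+1)),
      x j * Complex.exp (-2 * Real.pi * Complex.I * ((j:ℂ) * ((2 ^ (J - L - 1) * k + κ : ℕ):ℂ)) / ((2^J : ℕ):ℂ)) *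
        Complex.exp (2 * Real.pi * Complex.I * ((k : ℂ) * ℓ) / 2 ^ (L + 1))
      = x j * Complex.exp (-2*Real.pi*Complex.I*((j:ℂ)*κ)/2^J) *
        Complex.exp (2*Real.pi*Complex.I*((k:ℂ)*(((ℓ:ℤ) - j : ℤ):ℂ))/2^(L+1)) := by
    intro k _
    rw [mul_assoc]; conv_rhs => rw [mul_assoc]
    congr 1
    rw [← Complex.exp_add]; conv_rhs => rw [← Complex.exp_add]
    congr 1
    push_cast
    rw [hNsplit]
    field_simp
    ring
  rw [Finset.sum_congr rfl hterm, ← Finset.mul_sum]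
  have hse := sum_exp_eq (2^(L+1)) (by positivity) ((ℓ:ℤ)-j)
  push_cast at hse ⊢
  rw [hse]
  split
  · rw [mul_comm ((2:ℂ)^(L+1))⁻¹ _, mul_assoc, mul_inv_cancel₀ hMne, mul_one]
  · simp

/-- Exact averaging formula: the support values of `x` are recovered by averaging the
phase-corrected components of the vectors `z^{(κ_r)}` over distinct shifts `κ_0,…,κ_B`. -/
theorem averaging_formula (J L m μL ν B : ℕ) (κs : ℕ → ℕ) (hL : L + 1 < J)
    (hm : m < 2 ^ (L + 1)) (hμL : μL < 2 ^ (L + 1)) (hν : ν < 2 ^ (J - L - 1))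
    (hκlt : ∀ r < B + 1, κs r < 2 ^ (J - L - 1))
    (hκinj : ∀ r₁ < B + 1, ∀ r₂ < B + 1, κs r₁ = κs r₂ → r₁ = r₂)
    (x : ℕ → ℂ)
    (hsupp : ∀ k < 2 ^ J,
      (∀ r < m, k ≠ (μL + 2 ^ (L + 1) * ν + r) % 2 ^ J) → x k = 0) :
    ∀ k < m,
      x ((μL + 2 ^ (L + 1) * ν + k) % 2 ^ J) =
        ((B : ℂ) + 1)⁻¹ * ∑ r ∈ Finset.range (B + 1),
          zvec J L x (κs r) ((μL + k) % 2 ^ (L + 1)) *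
            Complex.exp (2 * Real.pi * Complex.I *
              ((κs r : ℂ) * (μL + 2 ^ (L + 1) * ν + k : ℕ)) / 2 ^ J) := by
  intro k hk
  have hL' : L + 1 ≤ J := hL.le
  have hNpos : 0 < 2 ^ J := Nat.pow_pos (by norm_num)
  have hMpos : 0 < 2 ^ (L + 1) := Nat.pow_pos (by norm_num)
  set N : ℕ := 2 ^ J with hNdef
  set M : ℕ := 2 ^ (L + 1) with hMdef
  set P : ℕ := 2 ^ (J - L - 1) with hPdef
  have hNMP : N = M * P := by rw [hNdef, hMdef, hPdef, ← pow_add]; congr 1; omega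
  set μ : ℕ := μL + M * ν with hμdef
  set j₀ : ℕ := (μ + k) % N with hj₀def
  set ℓ : ℕ := (μL + k) % M with hℓdef
  -- basic ℕ division identities
  obtain ⟨q1, e1⟩ : ∃ q1, M * q1 + ℓ = μL + k := ⟨(μL + k) / M, by rw [hℓdef]; exact Nat.div_add_mod _ _⟩
  obtain ⟨q2, e2⟩ : ∃ q2, N * q2 + j₀ = μ + k := ⟨(μ + k) / N, by rw [hj₀def]; exact Nat.div_add_mod _ _⟩
  have e1' : (M : ℤ) * q1 + ℓ = μL + k := by exact_mod_cast e1
  have e2' : (N : ℤ) * q2 + j₀ = μL + M * ν + k := by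
    rw [hμdef] at e2; exact_mod_cast e2
  have e3' : (N : ℤ) = M * P := by exact_mod_cast hNMP
  have hMcast : ((M : ℕ) : ℤ) = (2:ℤ)^(L+1) := by rw [hMdef]; push_cast; ring
  have hdvd₀ : ((2:ℤ)^(L+1)) ∣ (ℓ : ℤ) - j₀ := by
    rw [← hMcast]
    refine ⟨(P : ℤ) * q2 - q1 - ν, ?_⟩
    linear_combination e1' - e2' + (q2 : ℤ) * e3'
  have hS : ∀ r ∈ Finset.range (B + 1),
      zvec J L x (κs r) ℓ *
        Complex.exp (2 * Real.pi * Complex.I * ((κs r : ℂ) * ((μ + k : ℕ) : ℂ)) / 2 ^ J)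
      = x j₀ := by
    intro r _
    rw [zvec_eq J L hL' x (κs r) ℓ, Finset.sum_mul]
    rw [Finset.sum_eq_single_of_mem j₀ (Finset.mem_range.mpr (Nat.mod_lt _ hNpos))]
    · rw [if_pos hdvd₀, mul_assoc, ← Complex.exp_add]
      have hone : Complex.exp (-2*Real.pi*Complex.I*((j₀:ℂ)*(κs r))/2^J +
          2 * Real.pi * Complex.I * ((κs r : ℂ) * ((μ + k : ℕ) : ℂ)) / 2 ^ J) = 1 := by
        have hNC : ((2:ℂ))^J ≠ 0 := pow_ne_zero _ two_ne_zero
        have hμk : ((μ + k : ℕ) : ℂ) = (N : ℂ) * q2 + j₀ := by exact_mod_cast congrArg (Nat.cast : ℕ → ℂ) e2.symm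
        have hNCeq : ((N : ℕ) : ℂ) = (2:ℂ)^J := by rw [hNdef]; push_cast; ring
        rw [hμk, hNCeq]
        rw [show (-2*Real.pi*Complex.I*((j₀:ℂ)*(κs r))/2^J +
            2 * Real.pi * Complex.I * ((κs r : ℂ) * ((2:ℂ)^J * q2 + j₀)) / 2 ^ J)
          = ((κs r * q2 : ℕ) : ℤ) * (2 * Real.pi * Complex.I) by push_cast; field_simp; ring]
        exact Complex.exp_int_mul_two_pi_mul_I _
      rw [hone, mul_one]
    · intro j hj hne
      by_cases hdvd : ((2:ℤ)^(L+1)) ∣ (ℓ : ℤ) - j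
      · have hxj : x j = 0 := by
          apply hsupp j (Finset.mem_range.mp hj)
          intro r' hr' hj'
          apply hne
          obtain ⟨q3, e4⟩ : ∃ q3, N * q3 + j = μ + r' := by
            refine ⟨(μ + r') / N, ?_⟩
            rw [hj', hμdef]; exact Nat.div_add_mod _ _
          have e4' : (N : ℤ) * q3 + j = μL + M * ν + r' := by
            rw [hμdef] at e4; exact_mod_cast e4
          rw [← hMcast] at hdvd
          obtain ⟨c, hc⟩ := hdvd
          have hkr : (k : ℤ) - r' = (M : ℤ) * (c + q1 + ν - P * q3) := by
            linear_combination hc - e1' + e4' - (q3 : ℤ) * e3'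
          have : (k : ℤ) - r' = 0 := by
            refine Int.eq_zero_of_abs_lt_dvd ⟨(c + q1 + ν - P * q3), hkr⟩ ?_
            have hkm : (k : ℤ) < m := by exact_mod_cast hk
            have hrm : (r' : ℤ) < m := by exact_mod_cast hr'
            have hmM : (m : ℤ) < M := by exact_mod_cast hm
            rw [abs_sub_lt_iff]
            constructor <;> omega
          have hkr' : k = r' := by omega
          rw [hj', hj₀def, hμdef, hkr']
        rw [if_pos hdvd, hxj, zero_mul, zero_mul]
      · rw [if_neg hdvd, zero_mul]
  have hB : ((B : ℂ) + 1) ≠ 0 := by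
    have : ((B : ℂ) + 1) = ((B + 1 : ℕ) : ℂ) := by push_cast; ring
    rw [this]
    exact Nat.cast_ne_zero.mpr (Nat.succ_ne_zero B)
  calc x j₀ = ((B : ℂ) + 1)⁻¹ * (((B : ℂ) + 1) * x j₀) := by
        rw [← mul_assoc, inv_mul_cancel₀ hB, one_mul]
    _ = ((B : ℂ) + 1)⁻¹ * ∑ r ∈ Finset.range (B + 1),
          zvec J L x (κs r) ℓ *
            Complex.exp (2 * Real.pi * Complex.I * ((κs r : ℂ) * ((μ + k : ℕ) : ℂ)) / 2 ^ J) := by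
        rw [Finset.sum_congr rfl hS, Finset.sum_const, Finset.card_range]
        push_cast
        ring
end
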